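/- Under the same hypotheses (κ₂ with decay exponent s > 2, κ₃ dominated by products of κ₂ over spanning trees), there exists C such that for all N: ∑_{a1,...,a6=1}^N |κ₃((a1,a2),(a3,a4),(a5,a6))| ≤ C·N². -/

import Mathlib

open Finset MeasureTheory

/-- The metric on index pairs: d((a1,a2),(a3,a4)) = min(|a1-a3|+|a2-a4|, |a1-a4|+|a2-a3|). -/
noncomputable def dIdx {N : ℕ} (a b : Fin N × Fin N) : ℝ :=
  min (|((a.1:ℕ):ℝ) - ((b.1:ℕ):ℝ)| + |((a.2:ℕ):ℝ) - ((b.2:ℕ):ℝ)|)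
      (|((a.1:ℕ):ℝ) - ((b.2:ℕ):ℝ)| + |((a.2:ℕ):ℝ) - ((b.1:ℕ):ℝ)|)

/-- Euclidean norm of a vector in ℝ^N. -/
noncomputable def eucNorm {N : ℕ} (x : Fin N → ℝ) : ℝ := Real.sqrt (∑ i, x i ^ 2)

lemma dIdx_symm {N : ℕ} (a b : Fin N × Fin N) : dIdx a b = dIdx b a := by
  unfold dIdx
  rw [abs_sub_comm ((a.1:ℕ):ℝ) ((b.1:ℕ):ℝ), abs_sub_comm ((a.2:ℕ):ℝ) ((b.2:ℕ):ℝ),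
      abs_sub_comm ((a.1:ℕ):ℝ) ((b.2:ℕ):ℝ), abs_sub_comm ((a.2:ℕ):ℝ) ((b.1:ℕ):ℝ),
      add_comm (|((b.2:ℕ):ℝ) - ((a.1:ℕ):ℝ)|)]

lemma aux_g_summable {p : ℝ} (hp : 1 < p) :
    Summable (fun n : ℕ => 1 / (1 + (n:ℝ) ^ p)) := by
  have hmaj : Summable (fun n : ℕ => (2:ℝ) ^ p * ((n + 1 : ℕ) : ℝ) ^ (-p)) := by
    refine Summable.mul_left _ ?_
    exact (summable_nat_add_iff (f := fun n : ℕ => (n:ℝ) ^ (-p)) 1).2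
      (Real.summable_nat_rpow.2 (by linarith))
  refine Summable.of_nonneg_of_le (fun n => by positivity) (fun n => ?_) hmaj
  have hp0 : (0:ℝ) < p := by linarith
  have h1 : (0:ℝ) < ((n + 1 : ℕ) : ℝ) := by positivity
  have key : ((n + 1 : ℕ) : ℝ) ^ p ≤ 2 ^ p * (1 + (n:ℝ) ^ p) := by
    rcases Nat.eq_zero_or_pos n with h | h
    · subst h
      have h2 : (1:ℝ) ≤ (2:ℝ) ^ p := Real.one_le_rpow (by norm_num) hp0.le
      simp [Real.zero_rpow hp0.ne', Real.one_rpow]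
      linarith
    · have hn1 : (1:ℝ) ≤ (n:ℝ) := by exact_mod_cast h
      calc ((n + 1 : ℕ) : ℝ) ^ p ≤ ((2:ℝ) * (n:ℝ)) ^ p := by
            apply Real.rpow_le_rpow (by positivity) (by push_cast; linarith) hp0.le
        _ = 2 ^ p * (n:ℝ) ^ p := Real.mul_rpow (by norm_num) (by positivity)
        _ ≤ 2 ^ p * (1 + (n:ℝ) ^ p) := by
            have : (0:ℝ) < (2:ℝ) ^ p := Real.rpow_pos_of_pos (by norm_num) p
            nlinarith
  rw [Real.rpow_neg (le_of_lt h1), ← div_eq_mul_inv,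
    div_le_div_iff₀ (by positivity) (Real.rpow_pos_of_pos h1 p)]
  nlinarith [Real.rpow_nonneg (Nat.cast_nonneg n) p]

lemma aux_oneDim {p : ℝ} (hp : 1 < p) (N : ℕ) (a : ℕ) :
    ∑ b : Fin N, 1 / (1 + |(a:ℝ) - ((b:ℕ):ℝ)| ^ p) ≤
      2 * ∑' n : ℕ, 1 / (1 + (n:ℝ) ^ p) := by
  set g : ℕ → ℝ := fun n => 1 / (1 + (n:ℝ) ^ p) with hg
  have hg0 : ∀ n, 0 ≤ g n := fun n => by
    have := Real.rpow_nonneg (Nat.cast_nonneg n) p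
    positivity
  have hgsum : Summable g := aux_g_summable hp
  have hcast : ∀ b : Fin N, 1 / (1 + |(a:ℝ) - ((b:ℕ):ℝ)| ^ p) = g (Nat.dist a b) := by
    intro b
    have : |(a:ℝ) - ((b:ℕ):ℝ)| = ((Nat.dist a (b:ℕ) : ℕ) : ℝ) := by
      rcases le_total a (b:ℕ) with h | h
      · have hd : Nat.dist a (b:ℕ) = (b:ℕ) - a := by unfold Nat.dist; omega
        rw [abs_sub_comm, abs_of_nonneg (sub_nonneg.2 (by exact_mod_cast h)), hd, Nat.cast_sub h]
      · have hd : Nat.dist a (b:ℕ) = a - (b:ℕ) := by unfold Nat.dist; omega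
        rw [abs_of_nonneg (sub_nonneg.2 (by exact_mod_cast h)), hd, Nat.cast_sub h]
    rw [this]
  simp_rw [hcast]
  have hpart : ∀ (t : Finset (Fin N)),
      (∀ x ∈ t, ∀ y ∈ t, Nat.dist a (x:ℕ) = Nat.dist a (y:ℕ) → x = y) →
      ∑ b ∈ t, g (Nat.dist a b) ≤ ∑' n, g n := by
    intro t hinj
    rw [← Finset.sum_image (f := g) hinj]
    exact Summable.sum_le_tsum _ (fun i _ => hg0 i) hgsum
  rw [← Finset.sum_filter_add_sum_filter_not Finset.univ (fun b : Fin N => (b:ℕ) ≤ a)]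
  have h1 := hpart (Finset.filter (fun b : Fin N => (b:ℕ) ≤ a) Finset.univ) ?_
  have h2 := hpart (Finset.filter (fun b : Fin N => ¬ (b:ℕ) ≤ a) Finset.univ) ?_
  · linarith
  · intro x hx y hy hxy
    simp only [Finset.mem_filter, Finset.mem_univ, true_and] at hx hy
    simp only [Nat.dist] at hxy
    exact Fin.ext (by omega)
  · intro x hx y hy hxy
    simp only [Finset.mem_filter, Finset.mem_univ, true_and] at hx hy
    simp only [Nat.dist] at hxy
    exact Fin.ext (by omega)

lemma aux_split {s p : ℝ} (hs : 2 < s) (hp : p = s / 2) {x y : ℝ} (hx : 0 ≤ x) (hy : 0 ≤ y) :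
    1 / (1 + (x + y) ^ s) ≤ 3 * (1 / (1 + x ^ p) * (1 / (1 + y ^ p))) := by
  have hp1 : 1 < p := by rw [hp]; linarith
  have hp0 : 0 < p := by linarith
  have hs0 : 0 < s := by linarith
  have hxp : 0 ≤ x ^ p := Real.rpow_nonneg hx p
  have hyp : 0 ≤ y ^ p := Real.rpow_nonneg hy p
  have hxys : 0 ≤ (x + y) ^ s := Real.rpow_nonneg (by linarith) s
  have hxy : 0 ≤ x + y := by linarith
  -- each single power bound
  have hone : ∀ z : ℝ, 0 ≤ z → z ≤ x + y → z ^ p ≤ 1 + (x + y) ^ s := by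
    intro z hz hzle
    rcases le_or_gt (x + y) 1 with h | h
    · have : z ^ p ≤ 1 := Real.rpow_le_one hz (le_trans hzle h) hp0.le
      linarith
    · have h1 : z ^ p ≤ (x + y) ^ p := Real.rpow_le_rpow hz hzle hp0.le
      have h2 : (x + y) ^ p ≤ (x + y) ^ s :=
        Real.rpow_le_rpow_of_exponent_le h.le (by rw [hp]; linarith)
      linarith
  have hx1 : x ^ p ≤ 1 + (x + y) ^ s := hone x hx (by linarith)
  have hy1 : y ^ p ≤ 1 + (x + y) ^ s := hone y hy (by linarith)
  have hprod : x ^ p * y ^ p ≤ (x + y) ^ s := by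
    have h1 : x ^ p * y ^ p = (x * y) ^ p := (Real.mul_rpow hx hy).symm
    have h2 : (x * y) ^ p ≤ ((x + y) * (x + y)) ^ p :=
      Real.rpow_le_rpow (mul_nonneg hx hy) (by nlinarith) hp0.le
    have h3 : ((x + y) * (x + y)) ^ p = (x + y) ^ p * (x + y) ^ p :=
      Real.mul_rpow hxy hxy
    have h4 : (x + y) ^ p * (x + y) ^ p = (x + y) ^ s := by
      rw [← Real.rpow_add' hxy (by rw [hp]; intro hc; linarith)]
      congr 1
      rw [hp]; ring
    rw [h1]
    calc (x * y) ^ p ≤ ((x + y) * (x + y)) ^ p := h2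
      _ = (x + y) ^ s := by rw [h3, h4]
  have hkey : (1 + x ^ p) * (1 + y ^ p) ≤ 3 * (1 + (x + y) ^ s) := by nlinarith
  have hpos1 : 0 < 1 + x ^ p := by linarith
  have hpos2 : 0 < 1 + y ^ p := by linarith
  have hpos3 : 0 < 1 + (x + y) ^ s := by linarith
  rw [div_mul_div_comm, one_mul, mul_one_div, div_le_div_iff₀ hpos3 (by positivity)]
  nlinarith

lemma sum_prod_bound {N : ℕ} (f g : Fin N → ℝ) (hg0 : ∀ b, 0 ≤ g b)
    (Sf Sg : ℝ) (hf : ∑ b, f b ≤ Sf) (hg : ∑ b, g b ≤ Sg) (hSf : 0 ≤ Sf) :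
    ∑ b1 : Fin N, ∑ b2 : Fin N, f b1 * g b2 ≤ Sf * Sg := by
  rw [← Finset.sum_mul_sum]
  exact mul_le_mul hf hg (Finset.sum_nonneg fun b _ => hg0 b) hSf

lemma aux_rowsum {s : ℝ} (hs : 2 < s) {Cκ : ℝ} (hCκ : 0 < Cκ) (N : ℕ) (α : Fin N × Fin N) :
    ∑ β : Fin N × Fin N, Cκ / (1 + dIdx α β ^ s) ≤
      Cκ * 6 * (2 * ∑' n : ℕ, 1 / (1 + (n:ℝ) ^ (s / 2))) ^ 2 := by
  set p := s / 2 with hp_def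
  have hp : 1 < p := by rw [hp_def]; linarith
  set S : ℝ := 2 * ∑' n : ℕ, 1 / (1 + (n:ℝ) ^ p) with hS_def
  have htn : ∀ n : ℕ, 0 ≤ 1 / (1 + (n:ℝ) ^ p) := fun n => by
    have := Real.rpow_nonneg (Nat.cast_nonneg n) p
    positivity
  have hS0 : 0 ≤ S := by
    have : 0 ≤ ∑' n : ℕ, 1 / (1 + (n:ℝ) ^ p) := tsum_nonneg htn
    rw [hS_def]; linarith
  -- one-dimensional factors
  set e1 : Fin N → ℝ := fun b => 1 / (1 + |((α.1:ℕ):ℝ) - ((b:ℕ):ℝ)| ^ p) with he1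
  set e2 : Fin N → ℝ := fun b => 1 / (1 + |((α.2:ℕ):ℝ) - ((b:ℕ):ℝ)| ^ p) with he2
  have he10 : ∀ b, 0 ≤ e1 b := fun b => by
    have := Real.rpow_nonneg (abs_nonneg (((α.1:ℕ):ℝ) - ((b:ℕ):ℝ))) p
    positivity
  have he20 : ∀ b, 0 ≤ e2 b := fun b => by
    have := Real.rpow_nonneg (abs_nonneg (((α.2:ℕ):ℝ) - ((b:ℕ):ℝ))) p
    positivity
  have hsum1 : ∑ b : Fin N, e1 b ≤ S := aux_oneDim hp N (α.1 : ℕ)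
  have hsum2 : ∑ b : Fin N, e2 b ≤ S := aux_oneDim hp N (α.2 : ℕ)
  -- pointwise bound
  have hpt : ∀ β : Fin N × Fin N, Cκ / (1 + dIdx α β ^ s) ≤
      Cκ * 3 * (e1 β.1 * e2 β.2) + Cκ * 3 * (e1 β.2 * e2 β.1) := by
    intro β
    set d1 : ℝ := |((α.1:ℕ):ℝ) - ((β.1:ℕ):ℝ)| + |((α.2:ℕ):ℝ) - ((β.2:ℕ):ℝ)| with hd1
    set d2 : ℝ := |((α.1:ℕ):ℝ) - ((β.2:ℕ):ℝ)| + |((α.2:ℕ):ℝ) - ((β.1:ℕ):ℝ)| with hd2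
    have hmin : dIdx α β = min d1 d2 := rfl
    have hA : 1 / (1 + d1 ^ s) ≤ 3 * (e1 β.1 * e2 β.2) :=
      aux_split hs rfl (abs_nonneg _) (abs_nonneg _)
    have hB : 1 / (1 + d2 ^ s) ≤ 3 * (e1 β.2 * e2 β.1) :=
      aux_split hs rfl (abs_nonneg _) (abs_nonneg _)
    have hd10 : 0 ≤ d1 := add_nonneg (abs_nonneg _) (abs_nonneg _)
    have hd20 : 0 ≤ d2 := add_nonneg (abs_nonneg _) (abs_nonneg _)
    have hpos1 : (0:ℝ) < 1 + d1 ^ s := by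
      have := Real.rpow_nonneg hd10 s; linarith
    have hpos2 : (0:ℝ) < 1 + d2 ^ s := by
      have := Real.rpow_nonneg hd20 s; linarith
    have hminle : 1 / (1 + dIdx α β ^ s) ≤ 1 / (1 + d1 ^ s) + 1 / (1 + d2 ^ s) := by
      rw [hmin]
      rcases min_choice d1 d2 with h | h <;> rw [h]
      · have : (0:ℝ) ≤ 1 / (1 + d2 ^ s) := by positivity
        linarith
      · have : (0:ℝ) ≤ 1 / (1 + d1 ^ s) := by positivity
        linarith
    calc Cκ / (1 + dIdx α β ^ s) = Cκ * (1 / (1 + dIdx α β ^ s)) := by ring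
      _ ≤ Cκ * (1 / (1 + d1 ^ s) + 1 / (1 + d2 ^ s)) :=
          mul_le_mul_of_nonneg_left hminle hCκ.le
      _ ≤ Cκ * (3 * (e1 β.1 * e2 β.2) + 3 * (e1 β.2 * e2 β.1)) :=
          mul_le_mul_of_nonneg_left (add_le_add hA hB) hCκ.le
      _ = Cκ * 3 * (e1 β.1 * e2 β.2) + Cκ * 3 * (e1 β.2 * e2 β.1) := by ring
  calc ∑ β : Fin N × Fin N, Cκ / (1 + dIdx α β ^ s)
      ≤ ∑ β : Fin N × Fin N,
          (Cκ * 3 * (e1 β.1 * e2 β.2) + Cκ * 3 * (e1 β.2 * e2 β.1)) :=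
        Finset.sum_le_sum fun β _ => hpt β
    _ = Cκ * 3 * (∑ b1 : Fin N, ∑ b2 : Fin N, e1 b1 * e2 b2)
        + Cκ * 3 * (∑ b1 : Fin N, ∑ b2 : Fin N, e2 b1 * e1 b2) := by
        rw [Finset.sum_add_distrib, ← Finset.mul_sum, ← Finset.mul_sum,
          Fintype.sum_prod_type, Fintype.sum_prod_type]
        simp_rw [mul_comm (e1 _)]
    _ ≤ Cκ * 3 * (S * S) + Cκ * 3 * (S * S) := by
        have h1 : ∑ b1 : Fin N, ∑ b2 : Fin N, e1 b1 * e2 b2 ≤ S * S :=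
          sum_prod_bound e1 e2 he20 S S hsum1 hsum2 hS0
        have h2 : ∑ b1 : Fin N, ∑ b2 : Fin N, e2 b1 * e1 b2 ≤ S * S :=
          sum_prod_bound e2 e1 he10 S S hsum2 hsum1 hS0
        have hCκ3 : (0:ℝ) ≤ Cκ * 3 := by linarith
        exact add_le_add (mul_le_mul_of_nonneg_left h1 hCκ3)
          (mul_le_mul_of_nonneg_left h2 hCκ3)
    _ = Cκ * 6 * (2 * ∑' n : ℕ, 1 / (1 + (n:ℝ) ^ (s / 2))) ^ 2 := by
        rw [← hp_def, ← hS_def]; ring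

theorem three_cumulant_six_sums (s Cκ C₃ : ℝ) (hs : 2 < s) (hCκ : 0 < Cκ) (hC₃ : 0 < C₃) :
    ∃ C : ℝ, 0 < C ∧ ∀ (N : ℕ)
      (κ₂ : Fin N × Fin N → Fin N × Fin N → ℝ)
      (κ₃ : Fin N × Fin N → Fin N × Fin N → Fin N × Fin N → ℝ),
      (∀ α β, |κ₂ α β| ≤ Cκ / (1 + dIdx α β ^ s)) →
      (∀ α β γ, |κ₃ α β γ| ≤ C₃ * (|κ₂ α β * κ₂ β γ| + |κ₂ α β * κ₂ α γ| +
          |κ₂ α γ * κ₂ β γ|)) →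
      ∑ a1 : Fin N, ∑ a2 : Fin N, ∑ a3 : Fin N, ∑ a4 : Fin N, ∑ a5 : Fin N, ∑ a6 : Fin N,
        |κ₃ (a1, a2) (a3, a4) (a5, a6)| ≤ C * (N : ℝ) ^ 2 := by
  have hp : 1 < s / 2 := by linarith
  set S : ℝ := 2 * ∑' n : ℕ, 1 / (1 + (n:ℝ) ^ (s / 2)) with hS_def
  set K : ℝ := Cκ * 6 * S ^ 2 with hK_def
  refine ⟨C₃ * 3 * K ^ 2 + 1, by nlinarith [sq_nonneg K], ?_⟩
  intro N κ₂ κ₃ h2 h3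
  set F : Fin N × Fin N → Fin N × Fin N → ℝ := fun α β => Cκ / (1 + dIdx α β ^ s) with hF_def
  have hd0 : ∀ α β : Fin N × Fin N, 0 ≤ dIdx α β := fun α β => by
    unfold dIdx
    exact le_min (by positivity) (by positivity)
  have hF0 : ∀ α β, 0 ≤ F α β := fun α β => by
    rw [hF_def]
    have h1 := Real.rpow_nonneg (hd0 α β) s
    have h2 : (0:ℝ) < 1 + dIdx α β ^ s := by linarith
    positivity
  have hK0 : (0:ℝ) ≤ K := by
    rw [hK_def]; positivity
  have hrow : ∀ α : Fin N × Fin N, ∑ β : Fin N × Fin N, F α β ≤ K := fun α => by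
    rw [hF_def, hK_def, hS_def]
    exact aux_rowsum hs hCκ N α
  have hcol : ∀ β : Fin N × Fin N, ∑ α : Fin N × Fin N, F α β ≤ K := fun β => by
    have hsymm : ∀ α, F α β = F β α := fun α => by
      rw [hF_def]; simp only; rw [dIdx_symm]
    calc ∑ α : Fin N × Fin N, F α β = ∑ α : Fin N × Fin N, F β α :=
          Finset.sum_congr rfl fun α _ => hsymm α
      _ ≤ K := hrow β
  have hcard : ∑ _α : Fin N × Fin N, (K * K) = (N:ℝ) ^ 2 * (K * K) := by
    rw [Finset.sum_const, Finset.card_univ]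
    rw [show (Fintype.card (Fin N × Fin N)) = N * N by simp]
    rw [nsmul_eq_mul]
    push_cast
    ring
  have hT1 : ∑ α : Fin N × Fin N, ∑ β : Fin N × Fin N, ∑ γ : Fin N × Fin N,
      F α β * F β γ ≤ (N:ℝ) ^ 2 * (K * K) := by
    calc ∑ α : Fin N × Fin N, ∑ β : Fin N × Fin N, ∑ γ : Fin N × Fin N, F α β * F β γ
        = ∑ α : Fin N × Fin N, ∑ β : Fin N × Fin N, F α β * ∑ γ : Fin N × Fin N, F β γ := by
          simp_rw [← Finset.mul_sum]
      _ ≤ ∑ α : Fin N × Fin N, ∑ β : Fin N × Fin N, F α β * K :=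
          Finset.sum_le_sum fun α _ => Finset.sum_le_sum fun β _ =>
            mul_le_mul_of_nonneg_left (hrow β) (hF0 α β)
      _ = ∑ α : Fin N × Fin N, (∑ β : Fin N × Fin N, F α β) * K := by
          simp_rw [← Finset.sum_mul]
      _ ≤ ∑ _α : Fin N × Fin N, K * K :=
          Finset.sum_le_sum fun α _ => mul_le_mul_of_nonneg_right (hrow α) hK0
      _ = (N:ℝ) ^ 2 * (K * K) := hcard
  have hT2 : ∑ α : Fin N × Fin N, ∑ β : Fin N × Fin N, ∑ γ : Fin N × Fin N,
      F α β * F α γ ≤ (N:ℝ) ^ 2 * (K * K) := by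
    calc ∑ α : Fin N × Fin N, ∑ β : Fin N × Fin N, ∑ γ : Fin N × Fin N, F α β * F α γ
        = ∑ α : Fin N × Fin N, ∑ β : Fin N × Fin N, F α β * ∑ γ : Fin N × Fin N, F α γ := by
          simp_rw [← Finset.mul_sum]
      _ ≤ ∑ α : Fin N × Fin N, ∑ β : Fin N × Fin N, F α β * K :=
          Finset.sum_le_sum fun α _ => Finset.sum_le_sum fun β _ =>
            mul_le_mul_of_nonneg_left (hrow α) (hF0 α β)
      _ = ∑ α : Fin N × Fin N, (∑ β : Fin N × Fin N, F α β) * K := by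
          simp_rw [← Finset.sum_mul]
      _ ≤ ∑ _α : Fin N × Fin N, K * K :=
          Finset.sum_le_sum fun α _ => mul_le_mul_of_nonneg_right (hrow α) hK0
      _ = (N:ℝ) ^ 2 * (K * K) := hcard
  have hT3 : ∑ α : Fin N × Fin N, ∑ β : Fin N × Fin N, ∑ γ : Fin N × Fin N,
      F α γ * F β γ ≤ (N:ℝ) ^ 2 * (K * K) := by
    calc ∑ α : Fin N × Fin N, ∑ β : Fin N × Fin N, ∑ γ : Fin N × Fin N, F α γ * F β γ
        = ∑ α : Fin N × Fin N, ∑ γ : Fin N × Fin N, ∑ β : Fin N × Fin N, F α γ * F β γ := by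
          exact Finset.sum_congr rfl fun α _ => Finset.sum_comm
      _ = ∑ α : Fin N × Fin N, ∑ γ : Fin N × Fin N, F α γ * ∑ β : Fin N × Fin N, F β γ := by
          simp_rw [← Finset.mul_sum]
      _ ≤ ∑ α : Fin N × Fin N, ∑ γ : Fin N × Fin N, F α γ * K :=
          Finset.sum_le_sum fun α _ => Finset.sum_le_sum fun γ _ =>
            mul_le_mul_of_nonneg_left (hcol γ) (hF0 α γ)
      _ = ∑ α : Fin N × Fin N, (∑ γ : Fin N × Fin N, F α γ) * K := by
          simp_rw [← Finset.sum_mul]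
      _ ≤ ∑ _α : Fin N × Fin N, K * K :=
          Finset.sum_le_sum fun α _ => mul_le_mul_of_nonneg_right (hrow α) hK0
      _ = (N:ℝ) ^ 2 * (K * K) := hcard
  have hrw : (∑ α : Fin N × Fin N, ∑ β : Fin N × Fin N, ∑ γ : Fin N × Fin N, |κ₃ α β γ|)
      = ∑ a1 : Fin N, ∑ a2 : Fin N, ∑ a3 : Fin N, ∑ a4 : Fin N, ∑ a5 : Fin N, ∑ a6 : Fin N,
        |κ₃ (a1, a2) (a3, a4) (a5, a6)| := by
    simp_rw [Fintype.sum_prod_type]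
  rw [← hrw]
  have hN2 : (0:ℝ) ≤ (N:ℝ) ^ 2 := by positivity
  calc ∑ α : Fin N × Fin N, ∑ β : Fin N × Fin N, ∑ γ : Fin N × Fin N, |κ₃ α β γ|
      ≤ ∑ α : Fin N × Fin N, ∑ β : Fin N × Fin N, ∑ γ : Fin N × Fin N,
          C₃ * (F α β * F β γ + F α β * F α γ + F α γ * F β γ) := by
        refine Finset.sum_le_sum fun α _ => Finset.sum_le_sum fun β _ =>
          Finset.sum_le_sum fun γ _ => ?_
        refine (h3 α β γ).trans ?_
        rw [abs_mul, abs_mul, abs_mul]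
        refine mul_le_mul_of_nonneg_left ?_ hC₃.le
        exact add_le_add (add_le_add
          (mul_le_mul (h2 α β) (h2 β γ) (abs_nonneg _) (hF0 α β))
          (mul_le_mul (h2 α β) (h2 α γ) (abs_nonneg _) (hF0 α β)))
          (mul_le_mul (h2 α γ) (h2 β γ) (abs_nonneg _) (hF0 α γ))
    _ = C₃ * (∑ α : Fin N × Fin N, ∑ β : Fin N × Fin N, ∑ γ : Fin N × Fin N,
          (F α β * F β γ + F α β * F α γ + F α γ * F β γ)) := by
        simp_rw [← Finset.mul_sum]
    _ ≤ C₃ * ((N:ℝ) ^ 2 * (K * K) + (N:ℝ) ^ 2 * (K * K) + (N:ℝ) ^ 2 * (K * K)) := by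
        refine mul_le_mul_of_nonneg_left ?_ hC₃.le
        calc ∑ α : Fin N × Fin N, ∑ β : Fin N × Fin N, ∑ γ : Fin N × Fin N,
              (F α β * F β γ + F α β * F α γ + F α γ * F β γ)
            = (∑ α : Fin N × Fin N, ∑ β : Fin N × Fin N, ∑ γ : Fin N × Fin N, F α β * F β γ)
              + (∑ α : Fin N × Fin N, ∑ β : Fin N × Fin N, ∑ γ : Fin N × Fin N, F α β * F α γ)
              + (∑ α : Fin N × Fin N, ∑ β : Fin N × Fin N, ∑ γ : Fin N × Fin N, F α γ * F β γ) := by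
              simp_rw [Finset.sum_add_distrib]
          _ ≤ (N:ℝ) ^ 2 * (K * K) + (N:ℝ) ^ 2 * (K * K) + (N:ℝ) ^ 2 * (K * K) :=
              add_le_add (add_le_add hT1 hT2) hT3
    _ ≤ (C₃ * 3 * K ^ 2 + 1) * (N:ℝ) ^ 2 := by nlinarith
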